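/- Let f, g : ℝ → ℝ be twice continuously differentiable and strongly convex with g'(θ) ≠ 0 along the minimizer path. For λ ≥ 0 let θ(λ) be the unique minimizer of f + λg. Then λ ↦ g(θ(λ)) is strictly decreasing: for 0 ≤ λ₁ < λ₂, g(θ(λ₂)) < g(θ(λ₁)). -/

import Mathlib

/-- one-dimensional instance of Proposition 1: `λ ↦ g(θ(λ))` is
strictly decreasing on `[0,∞)`. -/
theorem stmt_10 (f g : ℝ → ℝ)
    (hf : ContDiff ℝ 2 f) (hg : ContDiff ℝ 2 g)
    (hfc : ∃ m > (0:ℝ), StrongConvexOn Set.univ m f)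
    (hgc : ∃ m > (0:ℝ), StrongConvexOn Set.univ m g)
    (θ : ℝ → ℝ)
    (hθ : ∀ lam ≥ (0:ℝ), ∀ t, t ≠ θ lam →
      f (θ lam) + lam * g (θ lam) < f t + lam * g t)
    (hgrad : ∀ lam ≥ (0:ℝ), deriv g (θ lam) ≠ 0) :
    ∀ lam₁ lam₂ : ℝ, 0 ≤ lam₁ → lam₁ < lam₂ → g (θ lam₂) < g (θ lam₁) := by
  intro l1 l2 h1 h12
  have h2 : (0:ℝ) ≤ l2 := le_trans h1 h12.le
  have hfd : Differentiable ℝ f := hf.differentiable (by norm_num)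
  have hgd : Differentiable ℝ g := hg.differentiable (by norm_num)
  -- derivative of f + lam*g at θ lam is zero
  have hderiv : ∀ lam ≥ (0:ℝ), deriv f (θ lam) + lam * deriv g (θ lam) = 0 := by
    intro lam hlam
    have hmin : IsLocalMin (fun t => f t + lam * g t) (θ lam) := by
      apply Filter.Eventually.of_forall
      intro t
      by_cases ht : t = θ lam
      · simp [ht]
      · exact (hθ lam hlam t ht).le
    have := hmin.deriv_eq_zero
    have hd : deriv (fun t => f t + lam * g t) (θ lam)
        = deriv f (θ lam) + lam * deriv g (θ lam) := by
      rw [deriv_fun_add (hfd _) ((hgd _).const_mul lam), deriv_const_mul lam (hgd _)]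
    rw [hd] at this
    exact this
  by_cases heq : θ l2 = θ l1
  · exfalso
    have e1 := hderiv l1 h1
    have e2 := hderiv l2 h2
    rw [heq] at e2
    have : (l2 - l1) * deriv g (θ l1) = 0 := by linarith
    have := mul_eq_zero.mp this
    rcases this with h | h
    · linarith
    · exact hgrad l1 h1 h
  · have k1 := hθ l1 h1 (θ l2) heq
    have k2 := hθ l2 h2 (θ l1) (fun h => heq h.symm)
    nlinarith
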